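/- With α₂ = 2μc²h²/(3(72 − c²h²)) and μ = 27/5 (i.e., μ = 5.4), the coefficient C₁ = (30240 − 483840·α₂/(c²h²))/(322560√3) tends to (30240 − 483840·(2·27/5)/(3·72))/(322560√3) = (30240 − 24192)/(322560√3) = 6048/(322560√3) as ch → 0, which is strictly smaller in magnitude than the standard Galerkin value 30240/(322560√3); hence for small ch the adapted-bubble choice μ = 5.4 reduces the leading pollution coefficient by a factor of 5. -/

import Mathlib

open Real Filter

/-- With α₂ = 2μc²h²/(3(72 - c²h²)) and μ = 27/5, the coefficient C₁ tends to
6048/(322560√3) as c²h² → 0⁺, which is five times smaller in magnitude than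
the standard Galerkin value 30240/(322560√3). -/
theorem stmt17 :
    Tendsto
      (fun t : ℝ =>
        (30240 - 483840 * (2 * (27 / 5) * t / (3 * (72 - t)) / t))
          / (322560 * Real.sqrt 3))
      (nhdsWithin 0 (Set.Ioi 0))
      (nhds (6048 / (322560 * Real.sqrt 3))) ∧
    |(6048 : ℝ) / (322560 * Real.sqrt 3)| < |(30240 : ℝ) / (322560 * Real.sqrt 3)| ∧
    (30240 : ℝ) / (322560 * Real.sqrt 3)
      = 5 * (6048 / (322560 * Real.sqrt 3)) := by
  have hs3 : Real.sqrt 3 > 0 := Real.sqrt_pos.mpr (by norm_num)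
  refine ⟨?_, ?_, by ring⟩
  · have h1 : Tendsto
        (fun t : ℝ => (30240 - 483840 * (2 * (27 / 5) / (3 * (72 - t))))
          / (322560 * Real.sqrt 3)) (nhdsWithin 0 (Set.Ioi 0))
        (nhds (6048 / (322560 * Real.sqrt 3))) := by
      have : ContinuousAt
          (fun t : ℝ => (30240 - 483840 * (2 * (27 / 5) / (3 * (72 - t))))
            / (322560 * Real.sqrt 3)) 0 := by
        fun_prop (disch := norm_num [hs3.ne'])
      have h := this.continuousWithinAt (s := Set.Ioi 0)
      have : (fun t : ℝ => (30240 - 483840 * (2 * (27 / 5) / (3 * (72 - t))))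
            / (322560 * Real.sqrt 3)) 0 = 6048 / (322560 * Real.sqrt 3) := by
        norm_num
      rw [ContinuousWithinAt] at h
      convert h using 2
      norm_num
    refine h1.congr' ?_
    filter_upwards [self_mem_nhdsWithin] with t (ht : 0 < t)
    have ht' : t ≠ 0 := ht.ne'
    field_simp
  · rw [abs_div, abs_div]
    have : |(322560 : ℝ) * Real.sqrt 3| > 0 := by positivity
    rw [abs_of_pos (by positivity), abs_of_pos (by norm_num), abs_of_pos (by norm_num)]
    gcongr
    norm_num
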